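/- arXiv:math/0505125 — 4 statements merged into one kernel-verified Lean document; each statement's English description precedes it below -/
import Mathlib

section
/- For every positive integer m, lim_{x→m} ( π·cot(πx)/(e^{2πx}−1) + 2m/((e^{2πm}−1)(m²−x²)) ) = 1/(2m(e^{2πm}−1)) − π/(2 sinh²(πm)). -/
open Real Filter Topology

lemma cot_add_nat_mul_pi (t : ℝ) (n : ℕ) : Real.cot (t + n * π) = Real.cot t := by
  rw [Real.cot_eq_cos_div_sin, Real.cot_eq_cos_div_sin, Real.sin_add_nat_mul_pi,
    Real.cos_add_nat_mul_pi]
  exact mul_div_mul_left _ _ (by positivity)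

lemma aux_num_limit :
    Tendsto (fun t : ℝ => (π * t * Real.cos (π * t) - Real.sin (π * t)) / t ^ 2)
      (𝓝[≠] (0 : ℝ)) (𝓝 0) := by
  have hinner : ∀ t : ℝ, HasDerivAt (fun x : ℝ => π * x) π t := by
    intro t
    simpa using (hasDerivAt_id t).const_mul π
  have hff' : ∀ t : ℝ, HasDerivAt (fun x : ℝ => π * x * Real.cos (π * x) - Real.sin (π * x))
      (-(π ^ 2) * t * Real.sin (π * t)) t := by
    intro t
    have hcos : HasDerivAt (fun x : ℝ => Real.cos (π * x)) (-Real.sin (π * t) * π) t :=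
      (Real.hasDerivAt_cos (π * t)).comp t (hinner t)
    have hsin : HasDerivAt (fun x : ℝ => Real.sin (π * x)) (Real.cos (π * t) * π) t :=
      (Real.hasDerivAt_sin (π * t)).comp t (hinner t)
    have := ((hinner t).mul hcos).sub hsin
    exact this.congr_deriv (by ring)
  have hgg' : ∀ t : ℝ, HasDerivAt (fun x : ℝ => x ^ 2) (2 * t) t := by
    intro t
    simpa using hasDerivAt_pow 2 t
  apply HasDerivAt.lhopital_zero_nhdsNE (f' := fun t => -(π ^ 2) * t * Real.sin (π * t))
      (g' := fun t => 2 * t)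
  · exact Eventually.of_forall hff'
  · exact Eventually.of_forall hgg'
  · filter_upwards [self_mem_nhdsWithin] with t (ht : t ≠ 0)
    exact mul_ne_zero two_ne_zero ht
  · have hc : Continuous (fun x : ℝ => π * x * Real.cos (π * x) - Real.sin (π * x)) := by
      continuity
    have := hc.tendsto' 0 0 (by simp)
    exact this.mono_left nhdsWithin_le_nhds
  · have hc : Continuous (fun x : ℝ => x ^ 2) := by continuity
    have := hc.tendsto' 0 0 (by simp)
    exact this.mono_left nhdsWithin_le_nhds
  · have hc : Continuous (fun t : ℝ => -(π ^ 2) * Real.sin (π * t) / 2) := by continuity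
    have h0 : Tendsto (fun t : ℝ => -(π ^ 2) * Real.sin (π * t) / 2) (𝓝 (0 : ℝ)) (𝓝 0) :=
      hc.tendsto' 0 0 (by simp)
    apply Tendsto.congr' _ (h0.mono_left nhdsWithin_le_nhds)
    filter_upwards [self_mem_nhdsWithin] with t (ht : t ≠ 0)
    field_simp

lemma aux_den_limit :
    Tendsto (fun t : ℝ => Real.sin (π * t) / t) (𝓝[≠] (0 : ℝ)) (𝓝 π) := by
  have hinner : HasDerivAt (fun x : ℝ => π * x) π 0 := by
    simpa using (hasDerivAt_id (0 : ℝ)).const_mul π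
  have hsin : HasDerivAt (fun x : ℝ => Real.sin (π * x)) (Real.cos (π * 0) * π) 0 :=
    (Real.hasDerivAt_sin (π * 0)).comp 0 hinner
  have hsin' : HasDerivAt (fun x : ℝ => Real.sin (π * x)) π 0 := by
    simpa using hsin
  have := hasDerivAt_iff_tendsto_slope.mp hsin'
  apply this.congr
  intro t
  simp [slope_def_field]

lemma key_zero :
    Tendsto (fun t : ℝ => π * Real.cot (π * t) - 1 / t) (𝓝[≠] (0 : ℝ)) (𝓝 0) := by
  have h := (aux_num_limit.div aux_den_limit Real.pi_ne_zero)
  rw [zero_div] at h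
  apply Tendsto.congr' _ h
  have hIoo : Set.Ioo (-1 : ℝ) 1 ∈ 𝓝 (0 : ℝ) := Ioo_mem_nhds (by norm_num) (by norm_num)
  filter_upwards [self_mem_nhdsWithin, eventually_nhdsWithin_of_eventually_nhds
    (eventually_of_mem hIoo (fun t ht => ht))] with t (ht : t ≠ 0) htI
  have hsin : Real.sin (π * t) ≠ 0 := by
    rw [Ne, Real.sin_eq_zero_iff_of_lt_of_lt]
    · intro h
      exact ht (by simpa [Real.pi_ne_zero] using h)
    · nlinarith [htI.1, Real.pi_pos]
    · nlinarith [htI.2, Real.pi_pos]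
  rw [Real.cot_eq_cos_div_sin, Pi.div_apply]
  field_simp

lemma key_at (m : ℕ+) :
    Tendsto (fun x : ℝ => π * Real.cot (π * x) - 1 / (x - m)) (𝓝[≠] (m : ℝ)) (𝓝 0) := by
  have hsub : Tendsto (fun x : ℝ => x - (m : ℝ)) (𝓝[≠] (m : ℝ)) (𝓝[≠] (0 : ℝ)) := by
    rw [tendsto_nhdsWithin_iff]
    constructor
    · have hcont : Continuous (fun x : ℝ => x - (m : ℝ)) := continuous_id.sub continuous_const
      have := (hcont.tendsto' (m : ℝ) 0 (by simp)).mono_left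
        (nhdsWithin_le_nhds (s := {(m : ℝ)}ᶜ))
      simpa using this
    · filter_upwards [self_mem_nhdsWithin] with x (hx : x ≠ m)
      exact sub_ne_zero.mpr hx
  have := key_zero.comp hsub
  apply this.congr
  intro x
  simp only [Function.comp]
  congr 2
  have : π * x = π * (x - m) + (m : ℕ) * π := by ring
  rw [this, cot_add_nat_mul_pi]

lemma key_prod (m : ℕ+) :
    Tendsto (fun x : ℝ => (x - m) * (π * Real.cot (π * x))) (𝓝[≠] (m : ℝ)) (𝓝 1) := by
  have hsub : Tendsto (fun x : ℝ => x - (m : ℝ)) (𝓝[≠] (m : ℝ)) (𝓝 0) := by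
    have hcont : Continuous (fun x : ℝ => x - (m : ℝ)) := continuous_id.sub continuous_const
    exact (hcont.tendsto' (m : ℝ) 0 (by simp)).mono_left
      (nhdsWithin_le_nhds (s := {(m : ℝ)}ᶜ))
  have h := (hsub.mul (key_at m)).add_const 1
  rw [zero_mul, zero_add] at h
  apply Tendsto.congr' _ h
  filter_upwards [self_mem_nhdsWithin] with x (hx : x ≠ (m : ℝ))
  have hxm : x - (m : ℝ) ≠ 0 := sub_ne_zero.mpr hx
  field_simp
  ring

theorem ramanujan_pole_cancellation (m : ℕ+) :
    Tendsto (fun x : ℝ => π * Real.cot (π * x) / (Real.exp (2 * π * x) - 1)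
        + 2 * (m : ℝ) / ((Real.exp (2 * π * m) - 1) * ((m : ℝ) ^ 2 - x ^ 2)))
      (𝓝[≠] (m : ℝ))
      (𝓝 (1 / (2 * m * (Real.exp (2 * π * m) - 1)) - π / (2 * Real.sinh (π * m) ^ 2))) := by
  have hm : (0 : ℝ) < m := by exact_mod_cast m.pos
  set E : ℝ := Real.exp (2 * π * m) - 1 with hEdef
  have hEpos : 0 < E := by
    have : (1 : ℝ) < Real.exp (2 * π * m) := by
      rw [Real.one_lt_exp_iff]; positivity
    linarith
  have hEne : E ≠ 0 := ne_of_gt hEpos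
  -- derivative of g = (exp(2πx)-1)⁻¹ at m
  have hinner : HasDerivAt (fun x : ℝ => 2 * π * x) (2 * π) (m : ℝ) := by
    simpa using (hasDerivAt_id (m : ℝ)).const_mul (2 * π)
  have hexp : HasDerivAt (fun x : ℝ => Real.exp (2 * π * x) - 1)
      (Real.exp (2 * π * m) * (2 * π)) (m : ℝ) :=
    ((Real.hasDerivAt_exp (2 * π * m)).comp (m : ℝ) hinner).sub_const 1
  have hg : HasDerivAt (fun x : ℝ => (Real.exp (2 * π * x) - 1)⁻¹)
      (-(Real.exp (2 * π * m) * (2 * π)) / E ^ 2) (m : ℝ) := hexp.inv hEne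
  have hslope := hasDerivAt_iff_tendsto_slope.mp hg
  -- assemble the limit
  have hT1 : Tendsto (fun x : ℝ => (x - m) * (π * Real.cot (π * x)) *
      slope (fun x : ℝ => (Real.exp (2 * π * x) - 1)⁻¹) (m : ℝ) x)
      (𝓝[≠] (m : ℝ)) (𝓝 (1 * (-(Real.exp (2 * π * m) * (2 * π)) / E ^ 2))) :=
    (key_prod m).mul hslope
  have hT2 : Tendsto (fun x : ℝ => (1 / E) * ((π * Real.cot (π * x) - 1 / (x - m)) + 1 / (x + m)))
      (𝓝[≠] (m : ℝ)) (𝓝 ((1 / E) * (0 + 1 / (m + m)))) := by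
    apply Tendsto.const_mul
    apply (key_at m).add
    have hc : Tendsto (fun x : ℝ => 1 / (x + m)) (𝓝 (m : ℝ)) (𝓝 (1 / (m + m))) := by
      apply Tendsto.div tendsto_const_nhds
      · exact (continuous_id.add continuous_const).tendsto _
      · positivity
    exact hc.mono_left nhdsWithin_le_nhds
  have hsum := hT1.add hT2
  have hgoal : (1 * (-(Real.exp (2 * π * m) * (2 * π)) / E ^ 2)) + ((1 / E) * (0 + 1 / (m + m)))
      = 1 / (2 * m * E) - π / (2 * Real.sinh (π * m) ^ 2) := by
    have ha : Real.exp (π * m) ≠ 0 := Real.exp_ne_zero _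
    have hE2 : E = Real.exp (π * m) ^ 2 - 1 := by
      have h2 : (2:ℝ) * π * m = π * m + π * m := by ring
      rw [hEdef, h2, Real.exp_add, sq]
    have hsinh : Real.sinh (π * m) = (Real.exp (π * m) - (Real.exp (π * m))⁻¹) / 2 := by
      rw [Real.sinh_eq, Real.exp_neg]
    have hsinhne : Real.sinh (π * m) ≠ 0 := by
      have : (0:ℝ) < Real.sinh (π * m) := by
        rw [hsinh]
        have h1 : (1:ℝ) < Real.exp (π * m) := by
          rw [Real.one_lt_exp_iff]; positivity
        have h2 : (Real.exp (π * m))⁻¹ < 1 := by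
          rw [inv_lt_one_iff₀]; right; exact h1
        linarith
      exact ne_of_gt this
    have hsq : Real.exp (2 * π * (m:ℝ)) = Real.exp (π * m) ^ 2 := by
      have h2 : (2:ℝ) * π * m = π * m + π * m := by ring
      rw [h2, Real.exp_add, sq]
    rw [hE2] at hEne ⊢
    rw [hsq]
    have hsinh2 : Real.sinh (π * m) ^ 2
        = (Real.exp (π * m) ^ 2 - 1) ^ 2 / (4 * Real.exp (π * m) ^ 2) := by
      rw [hsinh]
      field_simp
      ring
    rw [hsinh2]
    have hmm : (m:ℝ) ≠ 0 := ne_of_gt hm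
    field_simp
    ring
  rw [hgoal] at hsum
  apply Tendsto.congr' _ hsum
  -- eventual equality
  have hIoi : Set.Ioi (0 : ℝ) ∈ 𝓝 (m : ℝ) := Ioi_mem_nhds hm
  filter_upwards [self_mem_nhdsWithin,
    eventually_nhdsWithin_of_eventually_nhds (eventually_of_mem hIoi (fun x hx => hx))]
    with x (hx : x ≠ (m : ℝ)) (hxpos : (0:ℝ) < x)
  have hxm : x - (m : ℝ) ≠ 0 := sub_ne_zero.mpr hx
  have hxm' : x + (m : ℝ) ≠ 0 := by positivity
  have hA : Real.exp (2 * π * x) - 1 ≠ 0 := by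
    rw [sub_ne_zero]
    intro h
    have h0 : 2 * π * x = 0 := by simpa using h
    have hx0 : x = 0 := by
      simp [Real.pi_ne_zero, mul_eq_zero] at h0
      exact h0
    exact (ne_of_gt hxpos) hx0
  have hfac : (m : ℝ) ^ 2 - x ^ 2 = -((x - m) * (x + m)) := by ring
  rw [slope_def_field, hfac]
  have hgmE : (Real.exp (2 * π * (m : ℝ)) - 1) = E := rfl
  rw [hgmE]
  field_simp
  ring
end

section
/- For real x > 0 and 0 < |x| < 1, Σ_{k≥1} 4kx/((e^{2πk}−1)(k²−x²)²) = 4·Σ_{n≥1} n·x^{2n−1}·Σ_{k≥1} k^{−2n−1}/(e^{2πk}−1), where the double series converges absolutely. -/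
open Real

private lemma hasSum_pnat_iff' {g : ℕ → ℝ} {a : ℝ} (h0 : g 0 = 0) :
    HasSum (fun n : ℕ+ => g n) a ↔ HasSum g a := by
  have heq : (fun n : ℕ+ => g n) = g ∘ (fun n : ℕ+ => (n : ℕ)) := rfl
  rw [heq]
  refine Function.Injective.hasSum_iff (fun a b h => PNat.coe_injective h) ?_
  intro n hn
  have hn0 : n = 0 := by
    by_contra h
    exact hn ⟨⟨n, Nat.pos_of_ne_zero h⟩, rfl⟩
  simpa [hn0] using h0

set_option maxHeartbeats 1000000 in
theorem ramanujan_double_series_exp (x : ℝ) (hx0 : 0 < x) (hx1 : x < 1) :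
    Summable (fun p : ℕ+ × ℕ+ =>
        |4 * (p.1 : ℝ) * x ^ (2 * (p.1 : ℕ) - 1)
          / ((p.2 : ℝ) ^ (2 * (p.1 : ℕ) + 1) * (Real.exp (2 * π * p.2) - 1))|) ∧
    ∑' k : ℕ+, 4 * (k : ℝ) * x / ((Real.exp (2 * π * k) - 1) * ((k : ℝ) ^ 2 - x ^ 2) ^ 2)
      = 4 * ∑' n : ℕ+, (n : ℝ) * x ^ (2 * (n : ℕ) - 1)
          * ∑' k : ℕ+, 1 / ((k : ℝ) ^ (2 * (n : ℕ) + 1) * (Real.exp (2 * π * k) - 1)) := by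
  have hπ : (0:ℝ) < π := Real.pi_pos
  set E : ℕ+ → ℝ := fun k => Real.exp (2 * π * k) - 1 with hEdef
  have hk1 : ∀ k : ℕ+, (1:ℝ) ≤ (k : ℝ) := by
    intro k; exact_mod_cast k.one_le
  have hkpos : ∀ k : ℕ+, (0:ℝ) < (k : ℝ) := fun k => lt_of_lt_of_le one_pos (hk1 k)
  have hEbig : ∀ k : ℕ+, 2 * π * (k:ℝ) ≤ E k := by
    intro k
    have := Real.add_one_le_exp (2 * π * (k:ℝ))
    simp only [hEdef]; linarith
  have hEpos : ∀ k : ℕ+, 0 < E k := by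
    intro k
    have h1 : 0 < 2 * π * (k:ℝ) := by positivity
    linarith [hEbig k]
  -- the summand as a function on the product
  set a : ℕ+ × ℕ+ → ℝ := fun p =>
    4 * (p.1 : ℝ) * x ^ (2 * (p.1 : ℕ) - 1)
      / ((p.2 : ℝ) ^ (2 * (p.1 : ℕ) + 1) * E p.2) with hadef
  have ha_nonneg : ∀ p, 0 ≤ a p := by
    intro p
    have h1 : (0:ℝ) < (p.2 : ℝ) ^ (2 * (p.1 : ℕ) + 1) := pow_pos (hkpos p.2) _
    have h2 := hEpos p.2
    have h3 : (0:ℝ) ≤ 4 * (p.1 : ℝ) * x ^ (2 * (p.1 : ℕ) - 1) := by positivity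
    positivity
  -- summability of the n-factor over ℕ+
  have hx2 : |x ^ 2| < 1 := by
    rw [abs_of_nonneg (by positivity)]
    nlinarith
  have hfN : HasSum (fun n : ℕ => (4 / x) * ((n:ℝ) * (x ^ 2) ^ n))
      ((4 / x) * (x ^ 2 / (1 - x ^ 2) ^ 2)) := by
    have := hasSum_coe_mul_geometric_of_norm_lt_one (𝕜 := ℝ) (r := x ^ 2) (by
      simpa [Real.norm_eq_abs] using hx2)
    exact this.mul_left (4 / x)
  have hfN_eq : ∀ n : ℕ, (4 / x) * ((n:ℝ) * (x ^ 2) ^ n)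
      = 4 * (n:ℝ) * x ^ (2 * n - 1) := by
    intro n
    cases n with
    | zero => simp
    | succ m =>
      have h2 : 2 * (m + 1) - 1 = 2 * m + 1 := by omega
      rw [h2]
      have hxne : x ≠ 0 := ne_of_gt hx0
      field_simp
      ring
  have hfsum : Summable (fun n : ℕ+ => 4 * (n:ℝ) * x ^ (2 * (n:ℕ) - 1)) := by
    have h := hfN.summable.comp_injective (fun a b h => PNat.coe_injective h :
      Function.Injective (fun n : ℕ+ => (n : ℕ)))
    refine h.congr fun n => ?_
    exact hfN_eq n
  -- summability of the k-factor over ℕ+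
  have hgsum : Summable (fun k : ℕ+ => 1 / E k) := by
    have hgeo : Summable (fun k : ℕ => 2 * Real.exp (-(2 * π)) ^ k) := by
      refine (summable_geometric_of_lt_one (by positivity) ?_).mul_left 2
      rw [Real.exp_lt_one_iff]; linarith
    have h := hgeo.comp_injective (fun a b h => PNat.coe_injective h :
      Function.Injective (fun n : ℕ+ => (n : ℕ)))
    refine Summable.of_nonneg_of_le (fun k => one_div_nonneg.2 (hEpos k).le) ?_ h
    intro k
    show 1 / E k ≤ 2 * Real.exp (-(2 * π)) ^ (k:ℕ)
    have h1 : (1:ℝ) ≤ 2 * π * (k:ℝ) := by nlinarith [Real.pi_gt_three, hk1 k]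
    have hexp : (2:ℝ) ≤ Real.exp (2 * π * (k:ℝ)) := by
      have := Real.add_one_le_exp (2 * π * (k:ℝ)); linarith
    have hpow : Real.exp (-(2 * π)) ^ (k:ℕ) = Real.exp (-(2 * π * (k:ℝ))) := by
      rw [← Real.exp_nat_mul]; ring_nf
    rw [hpow]
    have hE1 : (0:ℝ) < Real.exp (2 * π * (k:ℝ)) - 1 := by linarith
    have hEeq : E k = Real.exp (2 * π * (k:ℝ)) - 1 := rfl
    rw [hEeq, div_le_iff₀ hE1]
    have hmul : Real.exp (-(2 * π * (k:ℝ))) * Real.exp (2 * π * (k:ℝ)) = 1 := by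
      rw [← Real.exp_add]; simp
    nlinarith [hmul, hexp, Real.exp_pos (-(2 * π * (k:ℝ)))]
  -- summability on the product
  have hprod : Summable (fun p : ℕ+ × ℕ+ =>
      (4 * (p.1 : ℝ) * x ^ (2 * (p.1 : ℕ) - 1)) * (1 / E p.2)) :=
    hfsum.mul_of_nonneg hgsum (fun n => by positivity)
      (fun k => one_div_nonneg.2 (hEpos k).le)
  have hasum : Summable a := by
    refine Summable.of_nonneg_of_le ha_nonneg ?_ hprod
    intro p
    have hN : (0:ℝ) ≤ 4 * (p.1 : ℝ) * x ^ (2 * (p.1 : ℕ) - 1) := by positivity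
    have hKpos : (0:ℝ) < (p.2 : ℝ) ^ (2 * (p.1 : ℕ) + 1) := pow_pos (hkpos p.2) _
    have hK1 : (1:ℝ) ≤ (p.2 : ℝ) ^ (2 * (p.1 : ℕ) + 1) :=
      one_le_pow₀ (hk1 p.2)
    have hKE : E p.2 ≤ (p.2 : ℝ) ^ (2 * (p.1 : ℕ) + 1) * E p.2 := by
      nlinarith [hEpos p.2]
    calc a p ≤ (4 * (p.1 : ℝ) * x ^ (2 * (p.1 : ℕ) - 1)) / E p.2 :=
          div_le_div_of_nonneg_left hN (hEpos p.2) hKE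
      _ = (4 * (p.1 : ℝ) * x ^ (2 * (p.1 : ℕ) - 1)) * (1 / E p.2) := by
          rw [mul_one_div]
  have habs : Summable (fun p : ℕ+ × ℕ+ => |a p|) := by
    refine hasum.congr fun p => ?_
    rw [abs_of_nonneg (ha_nonneg p)]
  constructor
  · exact habs
  -- per-k identity
  · have hks : ∀ k : ℕ+, HasSum (fun n : ℕ+ => a (n, k))
        (4 * (k:ℝ) * x / (E k * ((k:ℝ) ^ 2 - x ^ 2) ^ 2)) := by
      intro k
      set r : ℝ := x ^ 2 / (k:ℝ) ^ 2 with hrdef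
      have hk := hkpos k
      have hk2 : (1:ℝ) ≤ (k:ℝ) ^ 2 := by nlinarith [hk1 k]
      have hr1 : ‖r‖ < 1 := by
        rw [Real.norm_eq_abs, abs_of_nonneg (by positivity)]
        rw [div_lt_one (by positivity)]
        nlinarith
      have hbase : HasSum (fun n : ℕ => (n:ℝ) * r ^ n) (r / (1 - r) ^ 2) :=
        hasSum_coe_mul_geometric_of_norm_lt_one hr1
      have hmul := hbase.mul_left (4 / (x * (k:ℝ) * E k))
      have hEk := hEpos k
      have hxne : x ≠ 0 := ne_of_gt hx0
      have hkne : (k:ℝ) ≠ 0 := ne_of_gt hk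
      have hEne : E k ≠ 0 := ne_of_gt hEk
      have hne : ((k:ℝ) ^ 2 - x ^ 2) ≠ 0 := by nlinarith
      have hval : 4 / (x * (k:ℝ) * E k) * (r / (1 - r) ^ 2)
          = 4 * (k:ℝ) * x / (E k * ((k:ℝ) ^ 2 - x ^ 2) ^ 2) := by
        rw [hrdef]
        have hne2 : 1 - x ^ 2 / (k:ℝ) ^ 2 ≠ 0 := by
          intro h
          apply hne
          field_simp at h
          nlinarith [h]
        field_simp
      rw [hval] at hmul
      have hfun : (fun n : ℕ+ => a (n, k))
          = fun n : ℕ+ => 4 / (x * (k:ℝ) * E k) * (((n:ℕ):ℝ) * r ^ (n:ℕ)) := by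
        funext n
        obtain ⟨m, hm⟩ : ∃ m : ℕ, (n:ℕ) = m + 1 := ⟨(n:ℕ) - 1, by have := n.pos; omega⟩
        simp only [hadef, hm]
        have h2 : 2 * (m + 1) - 1 = 2 * m + 1 := by omega
        rw [h2, hrdef]
        push_cast
        simp only [div_pow]
        field_simp
        ring
      rw [hfun]
      exact (hasSum_pnat_iff'
        (g := fun n : ℕ => 4 / (x * (k:ℝ) * E k) * ((n:ℝ) * r ^ n)) (by simp)).2 hmul
    have hLHS : ∑' k : ℕ+, 4 * (k : ℝ) * x / (E k * ((k : ℝ) ^ 2 - x ^ 2) ^ 2)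
        = ∑' k : ℕ+, ∑' n : ℕ+, a (n, k) :=
      tsum_congr fun k => ((hks k).tsum_eq).symm
    rw [hLHS]
    have hswap : ∑' k : ℕ+, ∑' n : ℕ+, a (n, k) = ∑' n : ℕ+, ∑' k : ℕ+, a (n, k) :=
      Summable.tsum_comm' hasum (fun n => hasum.prod_factor n) (fun k => (hks k).summable)
    rw [hswap]
    rw [← tsum_mul_left]
    refine tsum_congr fun n => ?_
    have hinner : ∑' k : ℕ+, a (n, k)
        = (4 * (n:ℝ) * x ^ (2 * (n:ℕ) - 1)) *
          ∑' k : ℕ+, 1 / ((k : ℝ) ^ (2 * (n : ℕ) + 1) * E k) := by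
      rw [← tsum_mul_left]
      refine tsum_congr fun k => ?_
      simp only [hadef]
      rw [mul_one_div, div_eq_mul_one_div]
    rw [hinner]
    ring
end

section
/- For x > 0 and k a positive integer, ∫_x^∞ log|2 sin(πv)|·(2πk)²·e^{−2πkv} dv = 2π·e^{−2πkx}·( k²·Σ_{n≥1} sin(2πnx)/(k²+n²) − k³·Σ_{n≥1} cos(2πnx)/(n(k²+n²)) ). -/
open Real

open MeasureTheory Filter Set Topology


lemma sq_abs_one_sub_exp (r θ : ℝ) :
    ‖1 - (r:ℂ) * Complex.exp ((θ:ℂ) * Complex.I)‖ ^ 2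
      = (1 - r)^2 + 4 * r * Real.sin (θ/2) ^ 2 := by
  rw [Complex.sq_norm, Complex.normSq_apply]
  have h1 : (1 - (r:ℂ) * Complex.exp ((θ:ℂ) * Complex.I)).re = 1 - r * Real.cos θ := by
    simp [Complex.exp_ofReal_mul_I_re]
  have h2 : (1 - (r:ℂ) * Complex.exp ((θ:ℂ) * Complex.I)).im = -(r * Real.sin θ) := by
    simp [Complex.exp_ofReal_mul_I_im]
  rw [h1, h2]
  have hs : Real.sin (θ/2)^2 = 1/2 - Real.cos θ / 2 := by
    have := Real.sin_sq_eq_half_sub (θ/2)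
    rwa [mul_div_cancel₀ θ (two_ne_zero)] at this
  linear_combination (r^2) * Real.sin_sq_add_cos_sq θ - 4*r*hs

lemma abs_one_sub_exp (θ : ℝ) :
    ‖1 - Complex.exp ((θ:ℂ) * Complex.I)‖ = 2 * |Real.sin (θ/2)| := by
  have h := sq_abs_one_sub_exp 1 θ
  rw [Complex.ofReal_one, one_mul] at h
  nlinarith [norm_nonneg (1 - Complex.exp ((θ:ℂ) * Complex.I)),
    abs_nonneg (Real.sin (θ/2)), sq_abs (Real.sin (θ/2))]

lemma log_abs_one_sub_bound {r : ℝ} (hr : 1/2 ≤ r) (hr1 : r ≤ 1) {θ : ℝ}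
    (hs : Real.sin (θ/2) ≠ 0) :
    |Real.log (‖1 - (r:ℂ) * Complex.exp ((θ:ℂ) * Complex.I)‖)|
      ≤ Real.log 2 + (Real.log 2 - Real.log |2 * Real.sin (θ/2)|) := by
  set A := ‖1 - (r:ℂ) * Complex.exp ((θ:ℂ) * Complex.I)‖ with hA
  have hsq := sq_abs_one_sub_exp r θ
  have hs2 : 0 < Real.sin (θ/2)^2 := by positivity
  have hA2 : Real.sin (θ/2)^2 ≤ A^2 := by nlinarith
  have hAnn : 0 ≤ A := norm_nonneg _
  have hAle : A ≤ 2 := by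
    have : A ≤ ‖(1:ℂ)‖ + ‖(r:ℂ) * Complex.exp ((θ:ℂ) * Complex.I)‖ := by
      rw [hA]; exact norm_sub_le _ _
    have hn : ‖(r:ℂ) * Complex.exp ((θ:ℂ) * Complex.I)‖ = r := by
      rw [norm_mul, Complex.norm_real, Real.norm_eq_abs, Complex.norm_exp_ofReal_mul_I,
        mul_one, abs_of_nonneg (by linarith)]
    rw [hn, norm_one] at this; linarith
  have hsle : |Real.sin (θ/2)| ≤ A := by
    nlinarith [abs_nonneg (Real.sin (θ/2)), sq_abs (Real.sin (θ/2))]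
  have hApos : 0 < A := lt_of_lt_of_le (by positivity : (0:ℝ) < |Real.sin (θ/2)|) hsle
  have hspos : 0 < |2 * Real.sin (θ/2)| := by positivity
  have hup : Real.log A ≤ Real.log 2 := Real.log_le_log hApos hAle
  have hdn : Real.log |2 * Real.sin (θ/2)| - Real.log 2 ≤ Real.log A := by
    have h1 : |2 * Real.sin (θ/2)| / 2 ≤ A := by
      rw [abs_mul, abs_two]; linarith
    have := Real.log_le_log (by positivity) h1
    rwa [Real.log_div hspos.ne' two_ne_zero] at this
  have hL : Real.log |2 * Real.sin (θ/2)| ≤ Real.log 2 := by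
    apply Real.log_le_log hspos
    rw [abs_mul, abs_two]
    nlinarith [Real.abs_sin_le_one (θ/2)]
  have h02 : (0:ℝ) ≤ Real.log 2 := Real.log_nonneg one_le_two
  rw [abs_le]; constructor <;> linarith

lemma hasSum_log_abs_one_sub {r : ℝ} (h0 : 0 ≤ r) (h1 : r < 1) (θ : ℝ) :
    HasSum (fun n : ℕ+ ↦ -(r^(n:ℕ) * Real.cos ((n:ℕ) * θ) / (n:ℕ)))
      (Real.log (‖1 - (r:ℂ) * Complex.exp ((θ:ℂ) * Complex.I)‖)) := by
  set z : ℂ := (r:ℂ) * Complex.exp ((θ:ℂ) * Complex.I) with hz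
  have hnz : ‖z‖ < 1 := by
    rw [hz, norm_mul, Complex.norm_real, Real.norm_eq_abs, Complex.norm_exp_ofReal_mul_I,
      mul_one, abs_of_nonneg h0]
    exact h1
  have H := (Complex.hasSum_taylorSeries_neg_log hnz).neg
  have H2 := Complex.hasSum_re H
  rw [neg_neg, Complex.log_re] at H2
  have key : ∀ n : ℕ, (-(z^n/(n:ℂ))).re = -(r^n * Real.cos ((n:ℕ) * θ) / n) := by
    intro n
    have hzn : z^n / (n:ℂ) = ((r^n / n : ℝ) : ℂ) * Complex.exp ((((n:ℕ) * θ : ℝ) : ℂ) * Complex.I) := by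
      rw [hz, mul_pow, ← Complex.exp_nat_mul]
      push_cast
      ring_nf
    rw [hzn, Complex.neg_re, Complex.re_ofReal_mul, Complex.exp_ofReal_mul_I_re]
    ring
  have H3 := H2
  simp only [key] at H3
  refine (Function.Injective.hasSum_iff PNat.coe_injective ?_).mpr H3
  intro m hm
  have hm0 : m = 0 := by
    by_contra h
    exact hm ⟨⟨m, Nat.pos_of_ne_zero h⟩, rfl⟩
  subst hm0; simp

lemma integrableOn_cos_exp (x : ℝ) {a b : ℝ} (hb : 0 < b) :
    IntegrableOn (fun v ↦ Real.cos (a*v) * Real.exp (-(b*v))) (Set.Ioi x) := by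
  refine ((exp_neg_integrableOn_Ioi x hb).mono' ?_ ?_)
  · exact ((Real.continuous_cos.comp (continuous_const.mul continuous_id)).mul
      (Real.continuous_exp.comp ((continuous_const.mul continuous_id).neg))).aestronglyMeasurable
  · refine Filter.Eventually.of_forall fun v ↦ ?_
    rw [norm_mul, Real.norm_eq_abs, Real.norm_eq_abs, Real.abs_exp, neg_mul]
    calc |Real.cos (a*v)| * Real.exp (-(b*v)) ≤ 1 * Real.exp (-(b*v)) :=
          mul_le_mul_of_nonneg_right (Real.abs_cos_le_one _) (Real.exp_nonneg _)
      _ = Real.exp (-(b*v)) := one_mul _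

lemma tendsto_exp_neg_mul {b : ℝ} (hb : 0 < b) :
    Tendsto (fun v : ℝ ↦ Real.exp (-(b*v))) atTop (𝓝 0) :=
  Real.tendsto_exp_atBot.comp (tendsto_neg_atTop_atBot.comp (Tendsto.const_mul_atTop hb tendsto_id))

lemma integral_cos_exp (x : ℝ) {a b : ℝ} (ha : 0 < a) (hb : 0 < b) :
    ∫ v in Set.Ioi x, Real.cos (a*v) * Real.exp (-(b*v)) =
      Real.exp (-(b*x)) * (b * Real.cos (a*x) - a * Real.sin (a*x)) / (a^2+b^2) := by
  have hab : (0:ℝ) < a^2 + b^2 := by positivity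
  set F : ℝ → ℝ := fun v ↦ Real.exp (-(b*v)) * (a * Real.sin (a*v) - b * Real.cos (a*v)) / (a^2+b^2)
    with hF
  have hderiv : ∀ v : ℝ, HasDerivAt F (Real.cos (a*v) * Real.exp (-(b*v))) v := by
    intro v
    have he : HasDerivAt (fun v : ℝ ↦ Real.exp (-(b*v))) (-b * Real.exp (-(b*v))) v := by
      have h1 : HasDerivAt (fun v : ℝ ↦ -(b*v)) (-b) v := by
        simpa [neg_mul] using (hasDerivAt_id v).const_mul (-b)
      simpa [mul_comm] using h1.exp
    have h1 : HasDerivAt (fun v : ℝ ↦ a*v) a v := by simpa using (hasDerivAt_id v).const_mul a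
    have hs := (h1.sin.const_mul a).sub (h1.cos.const_mul b)
    have := (he.mul hs).div_const (a^2+b^2)
    refine this.congr_deriv ?_
    simp only [Pi.sub_apply, Pi.mul_apply]
    field_simp
    ring
  have htend : Tendsto F atTop (𝓝 0) := by
    apply squeeze_zero_norm (a := fun v ↦ Real.exp (-(b*v)) * (a + b) / (a^2+b^2))
    · intro v
      rw [hF]
      simp only
      rw [Real.norm_eq_abs, abs_div, abs_of_pos hab, abs_mul, Real.abs_exp]
      have h1 : |a * Real.sin (a*v)| ≤ a := by
        rw [abs_mul, abs_of_pos ha]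
        nlinarith [Real.abs_sin_le_one (a*v), abs_nonneg (Real.sin (a*v))]
      have h2 : |b * Real.cos (a*v)| ≤ b := by
        rw [abs_mul, abs_of_pos hb]
        nlinarith [Real.abs_cos_le_one (a*v), abs_nonneg (Real.cos (a*v))]
      have h3 : |a * Real.sin (a*v) - b * Real.cos (a*v)| ≤ a + b := by
        refine (abs_sub _ _).trans ?_
        linarith
      gcongr
    · have := ((tendsto_exp_neg_mul hb).mul_const (a+b)).div_const (a^2+b^2)
      simpa using this
  rw [MeasureTheory.integral_Ioi_of_hasDerivAt_of_tendsto
    (hderiv x).continuousAt.continuousWithinAt (fun v _ ↦ hderiv v)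
    (integrableOn_cos_exp x hb) htend, hF]
  ring

noncomputable def cterm (x : ℝ) (k n : ℕ+) : ℝ :=
  2*π*Real.exp (-(2*π*((k:ℕ):ℝ)*x)) *
    (((k:ℕ):ℝ)^2 * Real.sin (2*π*((n:ℕ):ℝ)*x) / (((k:ℕ):ℝ)^2+((n:ℕ):ℝ)^2)
      - ((k:ℕ):ℝ)^3 * Real.cos (2*π*((n:ℕ):ℝ)*x) / (((n:ℕ):ℝ)*(((k:ℕ):ℝ)^2+((n:ℕ):ℝ)^2)))

lemma claimA (x : ℝ) (k : ℕ+) {ρ : ℝ} (h0 : 0 ≤ ρ) (h1 : ρ < 1) :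
    ∫ v in Set.Ioi x,
        Real.log (‖1 - (ρ:ℂ) * Complex.exp (((2*π*v : ℝ) : ℂ) * Complex.I)‖)
          * ((2*π*((k:ℕ):ℝ))^2 * Real.exp (-(2*π*((k:ℕ):ℝ)*v)))
      = ∑' n : ℕ+, ρ^(n:ℕ) * cterm x k n := by
  have hkpos : (0:ℝ) < ((k:ℕ):ℝ) := by exact_mod_cast k.pos
  set b : ℝ := 2*π*((k:ℕ):ℝ) with hbdef
  have hbpos : 0 < b := by
    rw [hbdef]; positivity
  set G : ℕ+ → ℝ → ℝ :=
    fun n v ↦ -(ρ^(n:ℕ) * Real.cos (((n:ℕ):ℝ) * (2*π*v)) / ((n:ℕ):ℝ)) * (b^2 * Real.exp (-(b*v)))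
    with hG
  have hnpos : ∀ n : ℕ+, (0:ℝ) < ((n:ℕ):ℝ) := fun n ↦ by exact_mod_cast n.pos
  have hGeq : ∀ n : ℕ+, G n = fun v ↦ (-(ρ^(n:ℕ) / ((n:ℕ):ℝ)) * b^2) *
      (Real.cos ((((n:ℕ):ℝ)*(2*π))*v) * Real.exp (-(b*v))) := by
    intro n
    funext v
    rw [hG]
    have : (((n:ℕ):ℝ)*(2*π))*v = ((n:ℕ):ℝ) * (2*π*v) := by ring
    rw [this]
    ring
  have hpt : ∀ v : ℝ, HasSum (fun n ↦ G n v)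
      (Real.log (‖1 - (ρ:ℂ) * Complex.exp (((2*π*v:ℝ):ℂ) * Complex.I)‖)
        * (b^2 * Real.exp (-(b*v)))) :=
    fun v ↦ (hasSum_log_abs_one_sub h0 h1 (2*π*v)).mul_right _
  have hEint : IntegrableOn (fun v ↦ Real.exp (-(b*v))) (Set.Ioi x) := by
    simpa [neg_mul] using exp_neg_integrableOn_Ioi x hbpos
  have hGint : ∀ n : ℕ+, IntegrableOn (G n) (Set.Ioi x) := by
    intro n
    rw [hGeq n]
    exact (integrableOn_cos_exp x hbpos).const_mul _
  set CE : ℝ := ∫ v in Set.Ioi x, Real.exp (-(b*v)) with hCE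
  have hint_norm_le : ∀ n : ℕ+,
      (∫ v in Set.Ioi x, ‖G n v‖) ≤ ρ^(n:ℕ) * (b^2 * CE) := by
    intro n
    have hle : ∀ v ∈ Set.Ioi x, ‖G n v‖ ≤ (ρ^(n:ℕ) * b^2) * Real.exp (-(b*v)) := by
      intro v _
      rw [hG]
      simp only
      rw [norm_mul, Real.norm_eq_abs, Real.norm_eq_abs, abs_neg, abs_div, abs_mul,
        abs_of_nonneg (pow_nonneg h0 _), abs_of_pos (hnpos n),
        abs_of_nonneg (by positivity : (0:ℝ) ≤ b^2 * Real.exp (-(b*v)))]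
      have h1 : ρ^(n:ℕ) * |Real.cos (((n:ℕ):ℝ) * (2*π*v))| / ((n:ℕ):ℝ) ≤ ρ^(n:ℕ) := by
        have hn1 : (1:ℝ) ≤ ((n:ℕ):ℝ) := by exact_mod_cast n.one_le
        have := Real.abs_cos_le_one (((n:ℕ):ℝ) * (2*π*v))
        rw [div_le_iff₀ (hnpos n)]
        nlinarith [pow_nonneg h0 (n:ℕ), abs_nonneg (Real.cos (((n:ℕ):ℝ) * (2*π*v)))]
      calc ρ^(n:ℕ) * |Real.cos (((n:ℕ):ℝ) * (2*π*v))| / ((n:ℕ):ℝ) * (b^2 * Real.exp (-(b*v)))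
          ≤ ρ^(n:ℕ) * (b^2 * Real.exp (-(b*v))) := by
            apply mul_le_mul_of_nonneg_right h1 (by positivity)
        _ = (ρ^(n:ℕ) * b^2) * Real.exp (-(b*v)) := by ring
    calc (∫ v in Set.Ioi x, ‖G n v‖)
        ≤ ∫ v in Set.Ioi x, (ρ^(n:ℕ) * b^2) * Real.exp (-(b*v)) := by
          refine MeasureTheory.setIntegral_mono_on (hGint n).norm (hEint.const_mul _)
            measurableSet_Ioi hle
      _ = ρ^(n:ℕ) * (b^2 * CE) := by
          rw [MeasureTheory.integral_const_mul, hCE]; ring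
  have hsum_norm : Summable (fun n : ℕ+ ↦ ∫ v in Set.Ioi x, ‖G n v‖) := by
    refine Summable.of_nonneg_of_le
      (fun n ↦ integral_nonneg fun v ↦ norm_nonneg _) hint_norm_le ?_
    exact ((summable_geometric_of_lt_one h0 h1).mul_right _).comp_injective PNat.coe_injective
  have hswap := MeasureTheory.integral_tsum_of_summable_integral_norm hGint hsum_norm
  have heval : ∀ n : ℕ+, (∫ v in Set.Ioi x, G n v) = ρ^(n:ℕ) * cterm x k n := by
    intro n
    have hapos : (0:ℝ) < ((n:ℕ):ℝ)*(2*π) := by positivity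
    rw [hGeq n, MeasureTheory.integral_const_mul, integral_cos_exp x hapos hbpos]
    have harg : (((n:ℕ):ℝ)*(2*π))*x = 2*π*((n:ℕ):ℝ)*x := by ring
    rw [harg]
    unfold cterm
    rw [hbdef]
    have hd1 : (((n:ℕ):ℝ)*(2*π))^2 + (2*π*((k:ℕ):ℝ))^2 ≠ 0 := by positivity
    have hd2 : ((k:ℕ):ℝ)^2+((n:ℕ):ℝ)^2 ≠ 0 := by positivity
    have hn0 : ((n:ℕ):ℝ) ≠ 0 := (hnpos n).ne'
    field_simp
    ring
  calc (∫ v in Set.Ioi x,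
        Real.log (‖1 - (ρ:ℂ) * Complex.exp (((2*π*v : ℝ) : ℂ) * Complex.I)‖)
          * ((2*π*((k:ℕ):ℝ))^2 * Real.exp (-(2*π*((k:ℕ):ℝ)*v))))
      = ∫ v in Set.Ioi x, ∑' n : ℕ+, G n v := by
        refine MeasureTheory.integral_congr_ae (Filter.Eventually.of_forall fun v ↦ ?_)
        simp only
        exact ((hpt v).tsum_eq).symm
    _ = ∑' n : ℕ+, ∫ v in Set.Ioi x, G n v := hswap.symm
    _ = ∑' n : ℕ+, ρ^(n:ℕ) * cterm x k n := by
        exact tsum_congr heval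
lemma summable_one_div_sq_pnat : Summable (fun n : ℕ+ ↦ 1/((n:ℕ):ℝ)^2) := by
  have h : Summable (fun n : ℕ ↦ 1/(n:ℝ)^2) := Real.summable_one_div_nat_pow.mpr one_lt_two
  exact h.comp_injective PNat.coe_injective

lemma cterm_bound (x : ℝ) (k n : ℕ+) :
    |cterm x k n| ≤ (2*π*Real.exp (-(2*π*((k:ℕ):ℝ)*x)) * (((k:ℕ):ℝ)^2+((k:ℕ):ℝ)^3))
      * (1/((n:ℕ):ℝ)^2) := by
  have hk : (0:ℝ) < ((k:ℕ):ℝ) := by exact_mod_cast k.pos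
  have hn : (0:ℝ) < ((n:ℕ):ℝ) := by exact_mod_cast n.pos
  have hn1 : (1:ℝ) ≤ ((n:ℕ):ℝ) := by exact_mod_cast n.one_le
  have hpos : (0:ℝ) < 2*π*Real.exp (-(2*π*((k:ℕ):ℝ)*x)) := by positivity
  have hd : (0:ℝ) < ((k:ℕ):ℝ)^2+((n:ℕ):ℝ)^2 := by positivity
  unfold cterm
  rw [abs_mul, abs_of_pos hpos]
  have h1 : |((k:ℕ):ℝ)^2 * Real.sin (2*π*((n:ℕ):ℝ)*x) / (((k:ℕ):ℝ)^2+((n:ℕ):ℝ)^2)|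
      ≤ ((k:ℕ):ℝ)^2 / ((n:ℕ):ℝ)^2 := by
    rw [abs_div, abs_mul, abs_of_pos hd, abs_of_pos (by positivity : (0:ℝ) < ((k:ℕ):ℝ)^2)]
    refine div_le_div₀ (by positivity) ?_ (by positivity) (by nlinarith)
    exact mul_le_of_le_one_right (by positivity) (Real.abs_sin_le_one _)
  have h2 : |((k:ℕ):ℝ)^3 * Real.cos (2*π*((n:ℕ):ℝ)*x) / (((n:ℕ):ℝ)*(((k:ℕ):ℝ)^2+((n:ℕ):ℝ)^2))|
      ≤ ((k:ℕ):ℝ)^3 / ((n:ℕ):ℝ)^2 := by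
    rw [abs_div, abs_mul, abs_of_pos (by positivity : (0:ℝ) < ((n:ℕ):ℝ)*(((k:ℕ):ℝ)^2+((n:ℕ):ℝ)^2)),
      abs_of_pos (by positivity : (0:ℝ) < ((k:ℕ):ℝ)^3)]
    refine div_le_div₀ (by positivity) ?_ (by positivity) (by nlinarith)
    exact mul_le_of_le_one_right (by positivity) (Real.abs_cos_le_one _)
  have h3 := (abs_sub (((k:ℕ):ℝ)^2 * Real.sin (2*π*((n:ℕ):ℝ)*x) / (((k:ℕ):ℝ)^2+((n:ℕ):ℝ)^2))
    (((k:ℕ):ℝ)^3 * Real.cos (2*π*((n:ℕ):ℝ)*x) / (((n:ℕ):ℝ)*(((k:ℕ):ℝ)^2+((n:ℕ):ℝ)^2)))).trans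
    (by linarith : |((k:ℕ):ℝ)^2 * Real.sin (2*π*((n:ℕ):ℝ)*x) / (((k:ℕ):ℝ)^2+((n:ℕ):ℝ)^2)|
      + |((k:ℕ):ℝ)^3 * Real.cos (2*π*((n:ℕ):ℝ)*x) / (((n:ℕ):ℝ)*(((k:ℕ):ℝ)^2+((n:ℕ):ℝ)^2))|
      ≤ ((k:ℕ):ℝ)^2 / ((n:ℕ):ℝ)^2 + ((k:ℕ):ℝ)^3 / ((n:ℕ):ℝ)^2)
  refine (mul_le_mul_of_nonneg_left h3 hpos.le).trans (le_of_eq ?_)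
  field_simp
lemma abs_one_sub_exp_two_pi (v : ℝ) :
    ‖1 - Complex.exp (((2*π*v:ℝ):ℂ)*Complex.I)‖ = |2*Real.sin (π*v)| := by
  rw [abs_one_sub_exp, show (2*π*v)/2 = π*v by ring, abs_mul, abs_two]

lemma measurable_log_abs (ρ : ℝ) :
    Measurable (fun v : ℝ ↦ Real.log (‖1 - (ρ:ℂ) * Complex.exp (((2*π*v:ℝ):ℂ) * Complex.I)‖)) := by
  apply Real.measurable_log.comp
  apply Continuous.measurable
  exact continuous_norm.comp (by fun_prop)

lemma log_abs_le_const {ρ : ℝ} (h0 : 0 ≤ ρ) (h1 : ρ < 1) (w : ℂ) (hw : ‖w‖ = 1) :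
    |Real.log (‖1 - (ρ:ℂ) * w‖)| ≤ Real.log 2 + |Real.log (1-ρ)| := by
  set A := ‖1 - (ρ:ℂ) * w‖ with hA
  have hup : A ≤ 2 := by
    have h := norm_sub_le (1:ℂ) ((ρ:ℂ)*w)
    rw [norm_one, norm_mul, Complex.norm_real, Real.norm_eq_abs, hw,
      mul_one, abs_of_nonneg h0] at h
    rw [hA]; linarith
  have hdn : 1 - ρ ≤ A := by
    have h := norm_sub_norm_le (1:ℂ) ((ρ:ℂ)*w)
    rw [norm_one, norm_mul, Complex.norm_real, Real.norm_eq_abs, hw,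
      mul_one, abs_of_nonneg h0] at h
    rw [hA]; linarith
  have hρpos : (0:ℝ) < 1 - ρ := by linarith
  have hApos : 0 < A := lt_of_lt_of_le hρpos hdn
  have hu : Real.log A ≤ Real.log 2 := Real.log_le_log hApos hup
  have hl : Real.log (1-ρ) ≤ Real.log A := Real.log_le_log hρpos hdn
  have h02 : (0:ℝ) ≤ Real.log 2 := Real.log_nonneg one_le_two
  rw [abs_le]
  constructor
  · have := neg_abs_le (Real.log (1-ρ))
    linarith
  · linarith [abs_nonneg (Real.log (1-ρ))]

lemma tendsto_log_abs {v : ℝ} (hv : Real.sin (π*v) ≠ 0) {r : ℕ → ℝ}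
    (hrlim : Filter.Tendsto r atTop (𝓝 1)) :
    Filter.Tendsto (fun m ↦ Real.log (‖1 - ((r m):ℂ) * Complex.exp (((2*π*v:ℝ):ℂ) * Complex.I)‖)) atTop
      (𝓝 (Real.log |2*Real.sin (π*v)|)) := by
  have hcont : Continuous (fun ρ:ℝ ↦ ‖1 - (ρ:ℂ) * Complex.exp (((2*π*v:ℝ):ℂ) * Complex.I)‖) :=
    continuous_norm.comp (by fun_prop)
  have h1 : Filter.Tendsto (fun m ↦ ‖1 - ((r m):ℂ) * Complex.exp (((2*π*v:ℝ):ℂ) * Complex.I)‖) atTop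
      (𝓝 (|2*Real.sin (π*v)|)) := by
    have h2 := (hcont.tendsto 1).comp hrlim
    simp only [Complex.ofReal_one, one_mul, abs_one_sub_exp_two_pi v] at h2
    exact h2
  have hne : |2*Real.sin (π*v)| ≠ 0 := abs_ne_zero.mpr (mul_ne_zero two_ne_zero hv)
  exact (Real.continuousAt_log hne).tendsto.comp h1

lemma sin_pi_ne_zero_ae (x : ℝ) :
    ∀ᵐ v ∂(volume.restrict (Set.Ioi x)), Real.sin (π*v) ≠ 0 := by
  have hsub : {v:ℝ | Real.sin (π*v) = 0} ⊆ Set.range (fun n:ℤ ↦ (n:ℝ)) := by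
    intro v hv
    rcases Real.sin_eq_zero_iff.mp hv with ⟨n, hn⟩
    refine ⟨n, ?_⟩
    have hπ : (π:ℝ) ≠ 0 := Real.pi_ne_zero
    have : π * (n:ℝ) = π * v := by linarith [hn]
    exact mul_left_cancel₀ hπ this
  have hnull : volume {v:ℝ | Real.sin (π*v) = 0} = 0 :=
    measure_mono_null hsub ((Set.countable_range _).measure_zero _)
  have : (volume.restrict (Set.Ioi x)) {v:ℝ | Real.sin (π*v) = 0} = 0 :=
    le_antisymm (le_trans (Measure.restrict_le_self _) hnull.le) (by simp)
  rw [MeasureTheory.ae_iff]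
  simpa using this
lemma rseq_facts : (∀ m : ℕ, 1/2 ≤ 1 - ((m:ℝ)+2)⁻¹ ∧ 1 - ((m:ℝ)+2)⁻¹ < 1) ∧
    Filter.Tendsto (fun m : ℕ ↦ 1 - ((m:ℝ)+2)⁻¹) atTop (𝓝 1) := by
  constructor
  · intro m
    have h2 : (0:ℝ) < (m:ℝ)+2 := by positivity
    constructor
    · have : ((m:ℝ)+2)⁻¹ ≤ 1/2 := by
        rw [inv_le_comm₀ (by positivity) (by norm_num)]
        · push_cast; linarith [Nat.cast_nonneg (α := ℝ) m]
      linarith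
    · have : (0:ℝ) < ((m:ℝ)+2)⁻¹ := by positivity
      linarith
  · have h1 : Filter.Tendsto (fun m:ℕ ↦ (m:ℝ)+2) atTop atTop :=
      tendsto_atTop_add_const_right atTop 2 tendsto_natCast_atTop_atTop
    have h2 := h1.inv_tendsto_atTop
    simpa using tendsto_const_nhds.sub h2

lemma log_two_sub_log_abs_nonneg (t : ℝ) (h : |t| ≤ 2) : Real.log |t| ≤ Real.log 2 := by
  rcases eq_or_lt_of_le (abs_nonneg t) with h0 | h0
  · rw [← h0, Real.log_zero]
    exact Real.log_nonneg one_le_two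
  · exact Real.log_le_log h0 h

lemma log_abs_le_log_two {ρ : ℝ} (h0 : 0 ≤ ρ) (h1 : ρ ≤ 1) (w : ℂ) (hw : ‖w‖ = 1) :
    Real.log (‖1 - (ρ:ℂ) * w‖) ≤ Real.log 2 := by
  have hup : ‖1 - (ρ:ℂ) * w‖ ≤ 2 := by
    have h := norm_sub_le (1:ℂ) ((ρ:ℂ)*w)
    rw [norm_one, norm_mul, Complex.norm_real, Real.norm_eq_abs, hw,
      mul_one, abs_of_nonneg h0] at h
    linarith
  rcases eq_or_lt_of_le (norm_nonneg (1 - (ρ:ℂ)*w)) with h|h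
  · rw [← h, Real.log_zero]; exact Real.log_nonneg one_le_two
  · exact Real.log_le_log h hup

set_option maxHeartbeats 1000000 in
lemma integrable_g (x : ℝ) (k : ℕ+) :
    IntegrableOn (fun v ↦ (Real.log 2 - Real.log |2 * Real.sin (π*v)|)
      * ((2*π*((k:ℕ):ℝ))^2 * Real.exp (-(2*π*((k:ℕ):ℝ)*v)))) (Set.Ioi x) := by
  have hkpos : (0:ℝ) < ((k:ℕ):ℝ) := by exact_mod_cast k.pos
  have hbpos : (0:ℝ) < 2*π*((k:ℕ):ℝ) := by positivity
  have hEint : IntegrableOn (fun v ↦ Real.exp (-(2*π*((k:ℕ):ℝ)*v))) (Set.Ioi x) := by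
    simpa [neg_mul] using exp_neg_integrableOn_Ioi x hbpos
  have hE2int : IntegrableOn (fun v ↦ (2*π*((k:ℕ):ℝ))^2 * Real.exp (-(2*π*((k:ℕ):ℝ)*v)))
      (Set.Ioi x) := hEint.const_mul _
  have hEcont : Continuous (fun v ↦ (2*π*((k:ℕ):ℝ))^2 * Real.exp (-(2*π*((k:ℕ):ℝ)*v))) := by
    fun_prop
  have hEnn : ∀ v : ℝ, 0 ≤ (2*π*((k:ℕ):ℝ))^2 * Real.exp (-(2*π*((k:ℕ):ℝ)*v)) :=
    fun v ↦ by positivity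
  obtain ⟨hrf, hrlim⟩ := rseq_facts
  set r : ℕ → ℝ := fun m ↦ 1 - ((m:ℝ)+2)⁻¹ with hrdef
  have hr0 : ∀ m, 0 ≤ r m := fun m ↦ le_trans (by norm_num) (hrf m).1
  -- each F m is integrable
  set Fm : ℕ → ℝ → ℝ := fun m v ↦ Real.log (‖1 - ((r m):ℂ) * Complex.exp (((2*π*v:ℝ):ℂ) * Complex.I)‖)
      * ((2*π*((k:ℕ):ℝ))^2 * Real.exp (-(2*π*((k:ℕ):ℝ)*v))) with hFmdef
  have hFmMeas : ∀ m, AEStronglyMeasurable (Fm m) (volume.restrict (Set.Ioi x)) :=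
    fun m ↦ ((measurable_log_abs (r m)).mul hEcont.measurable).aestronglyMeasurable
  have hFmInt : ∀ m, IntegrableOn (Fm m) (Set.Ioi x) := by
    intro m
    refine (hE2int.const_mul (Real.log 2 + |Real.log (1 - r m)|)).mono' (hFmMeas m) ?_
    refine Filter.Eventually.of_forall fun v ↦ ?_
    rw [hFmdef]
    simp only
    rw [norm_mul, Real.norm_eq_abs, Real.norm_eq_abs, abs_of_nonneg (hEnn v)]
    exact mul_le_mul_of_nonneg_right
      (log_abs_le_const (hr0 m) (hrf m).2 _ (Complex.norm_exp_ofReal_mul_I _)) (hEnn v)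
  -- value of ∫ (log 2 * E - F m)  and uniform bound
  set S0 : ℝ := ∑' n : ℕ+, (2*π*Real.exp (-(2*π*((k:ℕ):ℝ)*x)) * (((k:ℕ):ℝ)^2+((k:ℕ):ℝ)^3))
      * (1/((n:ℕ):ℝ)^2) with hS0
  have hsummable_bound : Summable (fun n : ℕ+ ↦
      (2*π*Real.exp (-(2*π*((k:ℕ):ℝ)*x)) * (((k:ℕ):ℝ)^2+((k:ℕ):ℝ)^3)) * (1/((n:ℕ):ℝ)^2)) :=
    summable_one_div_sq_pnat.mul_left _
  have htsum_bound : ∀ m, |∑' n : ℕ+, (r m)^(n:ℕ) * cterm x k n| ≤ S0 := by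
    intro m
    have hterm : ∀ n : ℕ+, |(r m)^(n:ℕ) * cterm x k n| ≤
        (2*π*Real.exp (-(2*π*((k:ℕ):ℝ)*x)) * (((k:ℕ):ℝ)^2+((k:ℕ):ℝ)^3)) * (1/((n:ℕ):ℝ)^2) := by
      intro n
      rw [abs_mul]
      calc |(r m)^(n:ℕ)| * |cterm x k n| ≤ 1 * |cterm x k n| := by
            apply mul_le_mul_of_nonneg_right ?_ (abs_nonneg _)
            rw [abs_of_nonneg (pow_nonneg (hr0 m) _)]
            exact pow_le_one₀ (hr0 m) (le_of_lt (hrf m).2)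
        _ = |cterm x k n| := one_mul _
        _ ≤ _ := cterm_bound x k n
    have hsumm : Summable (fun n : ℕ+ ↦ (r m)^(n:ℕ) * cterm x k n) :=
      Summable.of_norm_bounded hsummable_bound hterm
    have habs : Summable (fun n : ℕ+ ↦ |(r m)^(n:ℕ) * cterm x k n|) :=
      hsummable_bound.of_nonneg_of_le (fun n ↦ abs_nonneg _) hterm
    have habs' : Summable (fun n : ℕ+ ↦ ‖(r m)^(n:ℕ) * cterm x k n‖) := by
      simpa only [Real.norm_eq_abs] using habs
    have h1 : ‖∑' n : ℕ+, (r m)^(n:ℕ) * cterm x k n‖ ≤ ∑' n : ℕ+, ‖(r m)^(n:ℕ) * cterm x k n‖ :=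
      norm_tsum_le_tsum_norm habs'
    rw [Real.norm_eq_abs] at h1
    calc |∑' n : ℕ+, (r m)^(n:ℕ) * cterm x k n| ≤ ∑' n : ℕ+, ‖(r m)^(n:ℕ) * cterm x k n‖ := h1
      _ = ∑' n : ℕ+, |(r m)^(n:ℕ) * cterm x k n| := by
          simp only [Real.norm_eq_abs]
      _ ≤ S0 := Summable.tsum_le_tsum hterm habs hsummable_bound
  set CE : ℝ := ∫ v in Set.Ioi x, (2*π*((k:ℕ):ℝ))^2 * Real.exp (-(2*π*((k:ℕ):ℝ)*v)) with hCE
  have hval : ∀ m, ∫ v in Set.Ioi x,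
      (Real.log 2 * ((2*π*((k:ℕ):ℝ))^2 * Real.exp (-(2*π*((k:ℕ):ℝ)*v))) - Fm m v)
      = Real.log 2 * CE - ∑' n : ℕ+, (r m)^(n:ℕ) * cterm x k n := by
    intro m
    rw [MeasureTheory.integral_sub (hE2int.const_mul _) (hFmInt m),
      MeasureTheory.integral_const_mul, hCE]
    congr 1
    exact claimA x k (hr0 m) (hrf m).2
  have hbnd : ∀ m, ∫ v in Set.Ioi x,
      (Real.log 2 * ((2*π*((k:ℕ):ℝ))^2 * Real.exp (-(2*π*((k:ℕ):ℝ)*v))) - Fm m v)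
      ≤ Real.log 2 * CE + S0 := by
    intro m
    rw [hval m]
    have := htsum_bound m
    have h1 := neg_abs_le (∑' n : ℕ+, (r m)^(n:ℕ) * cterm x k n)
    linarith
  -- nonnegativity of the integrand
  have hnn : ∀ m, ∀ v : ℝ, 0 ≤
      Real.log 2 * ((2*π*((k:ℕ):ℝ))^2 * Real.exp (-(2*π*((k:ℕ):ℝ)*v))) - Fm m v := by
    intro m v
    rw [hFmdef]
    simp only
    have hlogle : Real.log (‖1 - ((r m):ℂ) * Complex.exp (((2*π*v:ℝ):ℂ) * Complex.I)‖) ≤ Real.log 2 :=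
      log_abs_le_log_two (hr0 m) (le_of_lt (hrf m).2)
        (Complex.exp (((2*π*v:ℝ):ℂ) * Complex.I)) (Complex.norm_exp_ofReal_mul_I _)
    nlinarith [hEnn v]
  -- Fatou
  have hmeasm : ∀ m, Measurable (fun v ↦ ENNReal.ofReal
      (Real.log 2 * ((2*π*((k:ℕ):ℝ))^2 * Real.exp (-(2*π*((k:ℕ):ℝ)*v))) - Fm m v)) := by
    intro m
    exact ENNReal.measurable_ofReal.comp
      (((measurable_const.mul hEcont.measurable).sub
        ((measurable_log_abs (r m)).mul hEcont.measurable)))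
  have hsubint : ∀ m, Integrable (fun v ↦
      Real.log 2 * ((2*π*((k:ℕ):ℝ))^2 * Real.exp (-(2*π*((k:ℕ):ℝ)*v))) - Fm m v)
      (volume.restrict (Set.Ioi x)) := by
    intro m
    exact (hE2int.const_mul _).sub (hFmInt m)
  have hlint : ∀ m, ∫⁻ v in Set.Ioi x, ENNReal.ofReal
      (Real.log 2 * ((2*π*((k:ℕ):ℝ))^2 * Real.exp (-(2*π*((k:ℕ):ℝ)*v))) - Fm m v)
      ≤ ENNReal.ofReal (Real.log 2 * CE + S0) := by
    intro m
    rw [← MeasureTheory.ofReal_integral_eq_lintegral_ofReal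
      (hsubint m) (Filter.Eventually.of_forall (hnn m))]
    exact ENNReal.ofReal_le_ofReal (hbnd m)
  have hFatou := MeasureTheory.lintegral_liminf_le
    (μ := volume.restrict (Set.Ioi x)) (u := atTop) hmeasm
  have hFatou2 : ∫⁻ v in Set.Ioi x, Filter.liminf (fun m ↦ ENNReal.ofReal
      (Real.log 2 * ((2*π*((k:ℕ):ℝ))^2 * Real.exp (-(2*π*((k:ℕ):ℝ)*v))) - Fm m v)) atTop
      ≤ ENNReal.ofReal (Real.log 2 * CE + S0) := by
    refine hFatou.trans ?_
    refine le_trans (Filter.liminf_le_liminf (Filter.Eventually.of_forall hlint)) ?_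
    simp [Filter.liminf_const]
  -- identify the liminf a.e.
  have hliminf_eq : ∀ᵐ v ∂(volume.restrict (Set.Ioi x)),
      Filter.liminf (fun m ↦ ENNReal.ofReal
        (Real.log 2 * ((2*π*((k:ℕ):ℝ))^2 * Real.exp (-(2*π*((k:ℕ):ℝ)*v))) - Fm m v)) atTop
      = ENNReal.ofReal ((Real.log 2 - Real.log |2 * Real.sin (π*v)|)
          * ((2*π*((k:ℕ):ℝ))^2 * Real.exp (-(2*π*((k:ℕ):ℝ)*v)))) := by
    filter_upwards [sin_pi_ne_zero_ae x] with v hv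
    have htm : Filter.Tendsto (fun m ↦
        Real.log 2 * ((2*π*((k:ℕ):ℝ))^2 * Real.exp (-(2*π*((k:ℕ):ℝ)*v))) - Fm m v) atTop
        (𝓝 (Real.log 2 * ((2*π*((k:ℕ):ℝ))^2 * Real.exp (-(2*π*((k:ℕ):ℝ)*v)))
          - Real.log |2*Real.sin (π*v)| * ((2*π*((k:ℕ):ℝ))^2 * Real.exp (-(2*π*((k:ℕ):ℝ)*v))))) := by
      exact tendsto_const_nhds.sub ((tendsto_log_abs hv hrlim).mul_const _)
    have h2 : Filter.Tendsto (fun m ↦ ENNReal.ofReal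
        (Real.log 2 * ((2*π*((k:ℕ):ℝ))^2 * Real.exp (-(2*π*((k:ℕ):ℝ)*v))) - Fm m v)) atTop
        (𝓝 (ENNReal.ofReal
          (Real.log 2 * ((2*π*((k:ℕ):ℝ))^2 * Real.exp (-(2*π*((k:ℕ):ℝ)*v)))
            - Real.log |2*Real.sin (π*v)| * ((2*π*((k:ℕ):ℝ))^2 * Real.exp (-(2*π*((k:ℕ):ℝ)*v)))))) :=
      (ENNReal.continuous_ofReal.tendsto _).comp htm
    rw [h2.liminf_eq]
    congr 1
    ring
  rw [MeasureTheory.lintegral_congr_ae hliminf_eq] at hFatou2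
  -- conclude integrability
  constructor
  · exact ((measurable_const.sub (Real.measurable_log.comp
      ((continuous_const.mul (Real.continuous_sin.comp
        (continuous_const.mul continuous_id))).measurable.abs))).mul
      hEcont.measurable).aestronglyMeasurable
  · have hnnf : ∀ v : ℝ, 0 ≤ (Real.log 2 - Real.log |2 * Real.sin (π*v)|)
        * ((2*π*((k:ℕ):ℝ))^2 * Real.exp (-(2*π*((k:ℕ):ℝ)*v))) := by
      intro v
      apply mul_nonneg _ (hEnn v)
      have h2 : |2 * Real.sin (π*v)| ≤ 2 := by
        rw [abs_mul, abs_two]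
        nlinarith [Real.abs_sin_le_one (π*v), abs_nonneg (Real.sin (π*v))]
      have := log_two_sub_log_abs_nonneg (2 * Real.sin (π*v)) h2
      linarith
    rw [MeasureTheory.hasFiniteIntegral_iff_norm]
    calc ∫⁻ v in Set.Ioi x, ENNReal.ofReal ‖(Real.log 2 - Real.log |2 * Real.sin (π*v)|)
            * ((2*π*((k:ℕ):ℝ))^2 * Real.exp (-(2*π*((k:ℕ):ℝ)*v)))‖
        = ∫⁻ v in Set.Ioi x, ENNReal.ofReal ((Real.log 2 - Real.log |2 * Real.sin (π*v)|)
            * ((2*π*((k:ℕ):ℝ))^2 * Real.exp (-(2*π*((k:ℕ):ℝ)*v)))) := by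
          refine MeasureTheory.lintegral_congr fun v ↦ ?_
          rw [Real.norm_eq_abs, abs_of_nonneg (hnnf v)]
      _ ≤ ENNReal.ofReal (Real.log 2 * CE + S0) := hFatou2
      _ < ⊤ := ENNReal.ofReal_lt_top

set_option maxHeartbeats 1000000 in
theorem ramanujan_integral_identity (x : ℝ) (hx : 0 < x) (k : ℕ+) :
    (∫ v in Set.Ioi x, Real.log |2 * Real.sin (π * v)| * (2 * π * k) ^ 2 * Real.exp (-(2 * π * k * v)))
      = 2 * π * Real.exp (-(2 * π * k * x)) *
          ((k : ℝ) ^ 2 * (∑' n : ℕ+, Real.sin (2 * π * n * x) / ((k : ℝ) ^ 2 + (n : ℝ) ^ 2))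
            - (k : ℝ) ^ 3 * ∑' n : ℕ+, Real.cos (2 * π * n * x) / ((n : ℝ) * ((k : ℝ) ^ 2 + (n : ℝ) ^ 2))) := by
  have hkpos : (0:ℝ) < ((k:ℕ):ℝ) := by exact_mod_cast k.pos
  have hbpos : (0:ℝ) < 2*π*((k:ℕ):ℝ) := by positivity
  have hEint : IntegrableOn (fun v ↦ Real.exp (-(2*π*((k:ℕ):ℝ)*v))) (Set.Ioi x) := by
    simpa [neg_mul] using exp_neg_integrableOn_Ioi x hbpos
  have hE2int : IntegrableOn (fun v ↦ (2*π*((k:ℕ):ℝ))^2 * Real.exp (-(2*π*((k:ℕ):ℝ)*v)))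
      (Set.Ioi x) := hEint.const_mul _
  have hEcont : Continuous (fun v:ℝ ↦ (2*π*((k:ℕ):ℝ))^2 * Real.exp (-(2*π*((k:ℕ):ℝ)*v))) := by
    fun_prop
  have hEnn : ∀ v : ℝ, 0 ≤ (2*π*((k:ℕ):ℝ))^2 * Real.exp (-(2*π*((k:ℕ):ℝ)*v)) :=
    fun v ↦ by positivity
  obtain ⟨hrf, hrlim⟩ := rseq_facts
  set r : ℕ → ℝ := fun m ↦ 1 - ((m:ℝ)+2)⁻¹ with hrdef
  have hr0 : ∀ m, 0 ≤ r m := fun m ↦ le_trans (by norm_num) (hrf m).1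
  set Fm : ℕ → ℝ → ℝ := fun m v ↦ Real.log (‖1 - ((r m):ℂ) * Complex.exp (((2*π*v:ℝ):ℂ) * Complex.I)‖)
      * ((2*π*((k:ℕ):ℝ))^2 * Real.exp (-(2*π*((k:ℕ):ℝ)*v))) with hFmdef
  have hbound_int : Integrable (fun v ↦ (Real.log 2 - Real.log |2 * Real.sin (π*v)|)
      * ((2*π*((k:ℕ):ℝ))^2 * Real.exp (-(2*π*((k:ℕ):ℝ)*v)))
    + Real.log 2 * ((2*π*((k:ℕ):ℝ))^2 * Real.exp (-(2*π*((k:ℕ):ℝ)*v))))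
      (volume.restrict (Set.Ioi x)) := by
    exact (integrable_g x k).add (hE2int.const_mul _)
  have hDCT : Filter.Tendsto (fun m ↦ ∫ v in Set.Ioi x, Fm m v) atTop
      (𝓝 (∫ v in Set.Ioi x, Real.log |2 * Real.sin (π*v)|
        * ((2*π*((k:ℕ):ℝ))^2 * Real.exp (-(2*π*((k:ℕ):ℝ)*v))))) := by
    refine MeasureTheory.tendsto_integral_of_dominated_convergence
      (F := Fm)
      (bound := fun v ↦ (Real.log 2 - Real.log |2 * Real.sin (π*v)|)
          * ((2*π*((k:ℕ):ℝ))^2 * Real.exp (-(2*π*((k:ℕ):ℝ)*v)))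
        + Real.log 2 * ((2*π*((k:ℕ):ℝ))^2 * Real.exp (-(2*π*((k:ℕ):ℝ)*v))))
      (fun m ↦ ((measurable_log_abs (r m)).mul hEcont.measurable).aestronglyMeasurable)
      hbound_int ?_ ?_
    · intro m
      filter_upwards [sin_pi_ne_zero_ae x] with v hv
      rw [hFmdef]
      simp only
      rw [norm_mul, Real.norm_eq_abs, Real.norm_eq_abs, abs_of_nonneg (hEnn v)]
      have hv2 : Real.sin ((2*π*v)/2) ≠ 0 := by
        rw [show (2*π*v)/2 = π*v by ring]; exact hv
      have hb := log_abs_one_sub_bound (hrf m).1 (le_of_lt (hrf m).2) (θ := 2*π*v) hv2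
      calc |Real.log (‖1 - ((r m):ℂ) * Complex.exp (((2*π*v:ℝ):ℂ) * Complex.I)‖)|
            * ((2*π*((k:ℕ):ℝ))^2 * Real.exp (-(2*π*((k:ℕ):ℝ)*v)))
          ≤ (Real.log 2 + (Real.log 2 - Real.log |2 * Real.sin ((2*π*v)/2)|))
            * ((2*π*((k:ℕ):ℝ))^2 * Real.exp (-(2*π*((k:ℕ):ℝ)*v))) :=
            mul_le_mul_of_nonneg_right hb (hEnn v)
        _ = (Real.log 2 - Real.log |2 * Real.sin (π*v)|)
          * ((2*π*((k:ℕ):ℝ))^2 * Real.exp (-(2*π*((k:ℕ):ℝ)*v)))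
        + Real.log 2 * ((2*π*((k:ℕ):ℝ))^2 * Real.exp (-(2*π*((k:ℕ):ℝ)*v))) := by
            rw [show (2*π*v)/2 = π*v by ring]; ring
    · filter_upwards [sin_pi_ne_zero_ae x] with v hv
      exact (tendsto_log_abs hv hrlim).mul_const _
  have hIval : ∀ m, ∫ v in Set.Ioi x, Fm m v = ∑' n : ℕ+, (r m)^(n:ℕ) * cterm x k n :=
    fun m ↦ claimA x k (hr0 m) (hrf m).2
  have hTan : Filter.Tendsto (fun m ↦ ∑' n : ℕ+, (r m)^(n:ℕ) * cterm x k n) atTop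
      (𝓝 (∑' n : ℕ+, cterm x k n)) := by
    refine tendsto_tsum_of_dominated_convergence (bound := fun n : ℕ+ ↦
      (2*π*Real.exp (-(2*π*((k:ℕ):ℝ)*x)) * (((k:ℕ):ℝ)^2+((k:ℕ):ℝ)^3)) * (1/((n:ℕ):ℝ)^2))
      (summable_one_div_sq_pnat.mul_left _) ?_ ?_
    · intro n
      have h1 : Filter.Tendsto (fun m ↦ (r m)^(n:ℕ)) atTop (𝓝 1) := by
        simpa using hrlim.pow (n:ℕ)
      simpa using h1.mul_const (cterm x k n)
    · refine Filter.Eventually.of_forall fun m n ↦ ?_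
      rw [Real.norm_eq_abs, abs_mul]
      calc |(r m)^(n:ℕ)| * |cterm x k n| ≤ 1 * |cterm x k n| :=
            mul_le_mul_of_nonneg_right
              (by rw [abs_of_nonneg (pow_nonneg (hr0 m) _)]
                  exact pow_le_one₀ (hr0 m) (hrf m).2.le) (abs_nonneg _)
        _ = |cterm x k n| := one_mul _
        _ ≤ _ := cterm_bound x k n
  have hmain : (∫ v in Set.Ioi x, Real.log |2 * Real.sin (π*v)|
      * ((2*π*((k:ℕ):ℝ))^2 * Real.exp (-(2*π*((k:ℕ):ℝ)*v)))) = ∑' n : ℕ+, cterm x k n := by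
    refine tendsto_nhds_unique ?_ hTan
    have h := hDCT
    simp only [hIval] at h
    exact h
  have hnsq : ∀ n : ℕ+, (0:ℝ) < ((n:ℕ):ℝ) := fun n ↦ by exact_mod_cast n.pos
  have hA : Summable (fun n : ℕ+ ↦ Real.sin (2*π*((n:ℕ):ℝ)*x) / (((k:ℕ):ℝ)^2+((n:ℕ):ℝ)^2)) := by
    refine Summable.of_norm_bounded summable_one_div_sq_pnat fun n ↦ ?_
    rw [Real.norm_eq_abs, abs_div, abs_of_pos (by positivity : (0:ℝ) < ((k:ℕ):ℝ)^2+((n:ℕ):ℝ)^2)]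
    refine div_le_div₀ zero_le_one (Real.abs_sin_le_one _) (by positivity) (by nlinarith [hnsq n])
  have hB : Summable (fun n : ℕ+ ↦ Real.cos (2*π*((n:ℕ):ℝ)*x)
      / (((n:ℕ):ℝ)*(((k:ℕ):ℝ)^2+((n:ℕ):ℝ)^2))) := by
    refine Summable.of_norm_bounded summable_one_div_sq_pnat fun n ↦ ?_
    have hn1 : (1:ℝ) ≤ ((n:ℕ):ℝ) := by exact_mod_cast n.one_le
    rw [Real.norm_eq_abs, abs_div,
      abs_of_pos (by positivity : (0:ℝ) < ((n:ℕ):ℝ)*(((k:ℕ):ℝ)^2+((n:ℕ):ℝ)^2))]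
    refine div_le_div₀ zero_le_one (Real.abs_cos_le_one _) (by positivity) (by nlinarith [hnsq n])
  have hsplit : ∑' n : ℕ+, cterm x k n = 2*π*Real.exp (-(2*π*((k:ℕ):ℝ)*x)) *
      (((k:ℕ):ℝ)^2 * (∑' n : ℕ+, Real.sin (2*π*((n:ℕ):ℝ)*x) / (((k:ℕ):ℝ)^2+((n:ℕ):ℝ)^2))
        - ((k:ℕ):ℝ)^3 * ∑' n : ℕ+, Real.cos (2*π*((n:ℕ):ℝ)*x)
            / (((n:ℕ):ℝ)*(((k:ℕ):ℝ)^2+((n:ℕ):ℝ)^2))) := by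
    have h1 : ∀ n : ℕ+, cterm x k n = (2*π*Real.exp (-(2*π*((k:ℕ):ℝ)*x))) *
        (((k:ℕ):ℝ)^2 * (Real.sin (2*π*((n:ℕ):ℝ)*x) / (((k:ℕ):ℝ)^2+((n:ℕ):ℝ)^2))
          - ((k:ℕ):ℝ)^3 * (Real.cos (2*π*((n:ℕ):ℝ)*x)
              / (((n:ℕ):ℝ)*(((k:ℕ):ℝ)^2+((n:ℕ):ℝ)^2)))) := by
      intro n
      unfold cterm
      ring
    rw [tsum_congr h1, tsum_mul_left]
    congr 1
    rw [Summable.tsum_sub (hA.mul_left _) (hB.mul_left _), tsum_mul_left, tsum_mul_left]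
  have hLHS : (∫ v in Set.Ioi x,
      Real.log |2 * Real.sin (π * v)| * (2*π*((k:ℕ):ℝ))^2 * Real.exp (-(2*π*((k:ℕ):ℝ)*v)))
      = ∫ v in Set.Ioi x, Real.log |2 * Real.sin (π*v)|
          * ((2*π*((k:ℕ):ℝ))^2 * Real.exp (-(2*π*((k:ℕ):ℝ)*v))) := by
    refine MeasureTheory.integral_congr_ae (Filter.Eventually.of_forall fun v ↦ ?_)
    ring
  rw [hLHS, hmain, hsplit]
end

section
/- As x → +∞ along x = N + 1/2 with N a positive integer, Σ_{k≥1} log|x⁴−k⁴|/sinh²(πk) = 4·log x·Σ_{k≥1} 1/sinh²(πk) + O(x^{−2}). -/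
set_option maxHeartbeats 1000000

open Real Filter Asymptotics

lemma sinh_ge_aux (k : ℕ+) : Real.exp (π * k) / 4 ≤ Real.sinh (π * k) := by
  have h1 : (1:ℝ) ≤ π * k := by
    have : (1:ℝ) ≤ (k:ℝ) := by exact_mod_cast k.one_le
    nlinarith [Real.pi_gt_three]
  rw [Real.sinh_eq]
  have h2 : Real.exp (-(π*k)) ≤ Real.exp (π*k)/2 := by
    have := Real.exp_le_exp.mpr (neg_le_neg h1)
    have h3 : Real.exp (-(1:ℝ)) ≤ 1/2 := by
      rw [Real.exp_neg]
      have := Real.exp_one_gt_d9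
      rw [inv_le_iff_one_le_mul₀ (Real.exp_pos 1)]; nlinarith
    have h4 : (1:ℝ)/2 ≤ Real.exp (π*k)/2 := by
      have := Real.one_le_exp (by linarith : (0:ℝ) ≤ π*k); linarith
    linarith
  linarith

lemma inv_s_le (k : ℕ+) :
    1 / Real.sinh (π * k) ^ 2 ≤ 16 * Real.exp (-(2*π)) ^ (k:ℕ) := by
  have hs := sinh_ge_aux k
  have he : (0:ℝ) < Real.exp (π*k) := Real.exp_pos _
  have hpos : (0:ℝ) < Real.sinh (π*k) := lt_of_lt_of_le (by positivity) hs
  have h1 : Real.exp (π*k)^2/16 ≤ Real.sinh (π*k)^2 := by nlinarith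
  have h2 : Real.exp (-(2*π)) ^ (k:ℕ) = 1 / Real.exp (π*k)^2 := by
    rw [← Real.exp_nat_mul, ← Real.exp_nat_mul, one_div, ← Real.exp_neg]
    ring_nf
  rw [h2]
  rw [div_le_iff₀ (by positivity)]
  have : 16 * (1 / Real.exp (π*k)^2) * Real.sinh (π*k)^2
      = 16 * Real.sinh (π*k)^2 / Real.exp (π*k)^2 := by ring
  rw [this, le_div_iff₀ (by positivity)]
  nlinarith

lemma summable_S : Summable (fun k : ℕ+ => (k:ℝ)^4 / Real.sinh (π*k)^2) := by
  have hb : Summable (fun n : ℕ => 16 * (n:ℝ)^4 * Real.exp (-(2*π)) ^ n) := by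
    have hr : |Real.exp (-(2*π))| < 1 := by
      rw [abs_of_pos (Real.exp_pos _)]
      rw [Real.exp_lt_one_iff]
      have := Real.pi_pos
      linarith
    exact ((summable_pow_mul_geometric_of_norm_lt_one (R := ℝ) 4 (by rwa [Real.norm_eq_abs])).mul_left 16).congr
      (fun n => by ring)
  have hb2 : Summable (fun k : ℕ+ => 16 * ((k:ℕ):ℝ)^4 * Real.exp (-(2*π)) ^ (k:ℕ)) :=
    hb.comp_injective PNat.coe_injective
  refine Summable.of_nonneg_of_le (fun k => by positivity) (fun k => ?_) hb2
  have h := inv_s_le k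
  have hk : (0:ℝ) ≤ (k:ℝ)^4 := by positivity
  calc (k:ℝ)^4 / Real.sinh (π*k)^2 = (k:ℝ)^4 * (1 / Real.sinh (π*k)^2) := by ring
    _ ≤ (k:ℝ)^4 * (16 * Real.exp (-(2*π)) ^ (k:ℕ)) := by
        exact mul_le_mul_of_nonneg_left h hk
    _ = 16 * ((k:ℕ):ℝ)^4 * Real.exp (-(2*π)) ^ (k:ℕ) := by push_cast; ring

lemma summable_inv_s : Summable (fun k : ℕ+ => 1 / Real.sinh (π*k)^2) := by
  refine Summable.of_nonneg_of_le (fun k => by positivity) (fun k => ?_) summable_S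
  have hpos : (0:ℝ) < Real.sinh (π*k) := by
    have := sinh_ge_aux k; have := Real.exp_pos (π*(k:ℝ)); linarith
  have hk : (1:ℝ) ≤ (k:ℝ)^4 := by
    have h1 : (1:ℝ) ≤ (k:ℝ) := by exact_mod_cast k.one_le
    calc (1:ℝ) = 1^4 := by norm_num
      _ ≤ (k:ℝ)^4 := by gcongr
  exact div_le_div_of_nonneg_right hk (by positivity)


-- key bound, case 1: 1 ≤ k, k + 1/2 ≤ x
lemma key1 (x k : ℝ) (hx : 1 ≤ x) (hk : 1 ≤ k) (hkx : k + 1/2 ≤ x) :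
    |Real.log (|1 - k^4 / x^4|)| ≤ 2 * k^4 / x^3 := by
  have hx0 : (0:ℝ) < x := by linarith
  have hk0 : (0:ℝ) < k := by linarith
  have hgap : x^4 - k^4 ≥ x^3 / 2 := by
    have hfac : x^4 - k^4 = (x-k)*((x+k)*(x^2+k^2)) := by ring
    rw [hfac]
    have h1 : (1:ℝ)/2 ≤ x - k := by linarith
    have h2 : x^3 ≤ (x+k)*(x^2+k^2) := by nlinarith [sq_nonneg k, pow_pos hx0 3]
    have h3 : (0:ℝ) < x^3 := by positivity
    nlinarith
  have hx3 : (0:ℝ) < x^3 := by positivity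
  have ht : k^4 / x^4 < 1 := by
    rw [div_lt_one (by positivity)]
    linarith
  have ht0 : 0 ≤ k^4 / x^4 := by positivity
  set t := k^4 / x^4 with htdef
  have hlb : 1 / (2*x) ≤ 1 - t := by
    rw [htdef, div_le_iff₀ (by positivity)]
    have : (1 - k^4/x^4) * (2*x) = 2 * (x^4 - k^4) / x^3 := by field_simp
    rw [this, le_div_iff₀ (by positivity)]
    nlinarith
  have h1t : 0 < 1 - t := lt_of_lt_of_le (by positivity) hlb
  rw [abs_of_pos h1t]
  have hlogneg : Real.log (1 - t) ≤ 0 := Real.log_nonpos (by linarith) (by linarith)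
  rw [abs_of_nonpos hlogneg]
  have hineq : Real.log ((1-t)⁻¹) ≤ (1-t)⁻¹ - 1 :=
    Real.log_le_sub_one_of_pos (by positivity)
  rw [Real.log_inv] at hineq
  have h2 : (1-t)⁻¹ - 1 = t / (1-t) := by field_simp; ring
  have h3 : t / (1-t) ≤ t * (2*x) := by
    rw [div_le_iff₀ h1t]
    have h4 : 1/(2*x) * (2*x) ≤ (1-t) * (2*x) := by
      apply mul_le_mul_of_nonneg_right hlb (by positivity)
    have h5 : 1/(2*x)*(2*x) = 1 := by field_simp
    nlinarith
  have h6 : t * (2*x) = 2*k^4/x^3 := by rw [htdef]; field_simp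
  linarith [hineq, h2 ▸ hineq]

-- case 2: x + 1/2 ≤ k
lemma key2 (x k : ℝ) (hx : 1 ≤ x) (hkx : x + 1/2 ≤ k) :
    |Real.log (|1 - k^4 / x^4|)| ≤ 2 * k^4 / x^3 := by
  have hx0 : (0:ℝ) < x := by linarith
  have hk0 : (0:ℝ) < k := by linarith
  have hgap : k^4 - x^4 ≥ x^3 / 2 := by
    have hfac : k^4 - x^4 = (k-x)*((x+k)*(x^2+k^2)) := by ring
    rw [hfac]
    have h1 : (1:ℝ)/2 ≤ k - x := by linarith
    have h2 : x^3 ≤ (x+k)*(x^2+k^2) := by nlinarith [sq_nonneg k, pow_pos hx0 3]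
    have h3 : (0:ℝ) < x^3 := by positivity
    nlinarith
  have hx3 : (0:ℝ) < x^3 := by positivity
  have ht : 1 < k^4 / x^4 := by
    rw [lt_div_iff₀ (by positivity)]
    linarith
  set t := k^4 / x^4 with htdef
  have habs : |1 - t| = t - 1 := by rw [abs_of_nonpos (by linarith)]; ring
  rw [habs]
  have hlb : 1 / (2*x) ≤ t - 1 := by
    rw [htdef, div_le_iff₀ (by positivity)]
    have : (k^4/x^4 - 1) * (2*x) = 2 * (k^4 - x^4) / x^3 := by field_simp
    rw [this, le_div_iff₀ (by positivity)]
    nlinarith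
  have hxk : x^4 ≤ k^4 := by linarith
  have hub : Real.log (t-1) ≤ 2*k^4/x^3 := by
    calc Real.log (t-1) ≤ (t-1) - 1 := Real.log_le_sub_one_of_pos (by linarith [hlb]; )
      _ ≤ t := by linarith
      _ = k^4/x^4 := rfl
      _ ≤ 2*k^4/x^3 := by
          rw [div_le_div_iff₀ (by positivity) (by positivity)]
          have hk4 : (0:ℝ) < k^4 := by positivity
          nlinarith [mul_le_mul_of_nonneg_left hx (le_of_lt hk4)]
  have hlbound : -(2*k^4/x^3) ≤ Real.log (t-1) := by
    have h1 : Real.log (1/(2*x)) ≤ Real.log (t-1) :=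
      Real.log_le_log (by positivity) hlb
    have h2 : Real.log (1/(2*x)) = - Real.log (2*x) := by
      rw [one_div, Real.log_inv]
    have h3 : Real.log (2*x) ≤ 2*x - 1 := Real.log_le_sub_one_of_pos (by positivity)
    have h4 : 2*x ≤ 2*k^4/x^3 := by
      rw [le_div_iff₀ (by positivity)]
      nlinarith
    linarith [h2 ▸ h1]
  exact abs_le.mpr ⟨hlbound, hub⟩




lemma key (N : ℕ) (hN : 1 ≤ N) (k : ℕ+) :
    |Real.log (|1 - (k:ℝ)^4 / ((N:ℝ)+1/2)^4|)| ≤ 2 * (k:ℝ)^4 / ((N:ℝ)+1/2)^3 := by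
  have hN1 : (1:ℝ) ≤ (N:ℝ) := by exact_mod_cast hN
  have hk1 : (1:ℝ) ≤ (k:ℝ) := by exact_mod_cast k.one_le
  rcases le_or_gt (k:ℕ) N with h | h
  · exact key1 _ _ (by linarith) hk1 (by
      have : (k:ℝ) ≤ (N:ℝ) := by exact_mod_cast h
      linarith)
  · exact key2 _ _ (by linarith) (by
      have : (N:ℝ) + 1 ≤ (k:ℝ) := by exact_mod_cast h
      linarith)

lemma tne (N : ℕ) (k : ℕ+) : (1:ℝ) - (k:ℝ)^4 / ((N:ℝ)+1/2)^4 ≠ 0 := by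
  set x : ℝ := (N:ℝ)+1/2 with hxdef
  have hx0 : (0:ℝ) < x := by positivity
  have hk1 : (1:ℝ) ≤ (k:ℝ) := by exact_mod_cast k.one_le
  have hk0 : (0:ℝ) ≤ (k:ℝ) := by linarith
  rcases le_or_gt (k:ℕ) N with h | h
  · have hlt : (k:ℝ) < x := by
      have : (k:ℝ) ≤ (N:ℝ) := by exact_mod_cast h
      rw [hxdef]; linarith
    have : (k:ℝ)^4 < x^4 := by gcongr
    have ht : (k:ℝ)^4 / x^4 < 1 := by rw [div_lt_one (by positivity)]; exact this
    linarith
  · have hlt : x < (k:ℝ) := by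
      have : (N:ℝ) + 1 ≤ (k:ℝ) := by exact_mod_cast h
      rw [hxdef]; linarith
    have : x^4 < (k:ℝ)^4 := by gcongr
    have ht : 1 < (k:ℝ)^4 / x^4 := by rw [lt_div_iff₀ (by positivity)]; linarith
    linarith

theorem ramanujan_log_sum_asymptotic :
    (fun N : ℕ =>
        (∑' k : ℕ+, Real.log |((N : ℝ) + 1 / 2) ^ 4 - (k : ℝ) ^ 4| / Real.sinh (π * k) ^ 2)
          - 4 * Real.log ((N : ℝ) + 1 / 2) * ∑' k : ℕ+, 1 / Real.sinh (π * k) ^ 2)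
      =O[atTop] (fun N : ℕ => ((N : ℝ) + 1 / 2) ^ (-2 : ℤ)) := by
  set C : ℝ := ∑' k : ℕ+, (k:ℝ)^4 / Real.sinh (π*k)^2 with hCdef
  have hC0 : 0 ≤ C := tsum_nonneg (fun k => by positivity)
  rw [isBigO_iff]
  refine ⟨2*C, ?_⟩
  filter_upwards [eventually_ge_atTop 1] with N hN
  set x : ℝ := (N:ℝ) + 1/2 with hxdef
  have hN1 : (1:ℝ) ≤ (N:ℝ) := by exact_mod_cast hN
  have hx1 : (1:ℝ) ≤ x := by rw [hxdef]; linarith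
  have hx0 : (0:ℝ) < x := by linarith
  have hs : ∀ k : ℕ+, (0:ℝ) < Real.sinh (π*k)^2 := by
    intro k
    have hk1 : (1:ℝ) ≤ (k:ℝ) := by exact_mod_cast k.one_le
    have : 0 < π * (k:ℝ) := by positivity
    have := Real.sinh_pos_iff.mpr this
    positivity
  -- remainder terms
  set L : ℕ+ → ℝ := fun k => Real.log (|1 - (k:ℝ)^4 / x^4|) with hLdef
  have hkey : ∀ k : ℕ+, |L k| ≤ 2 * (k:ℝ)^4 / x^3 := fun k => key N hN k
  have hterm : ∀ k : ℕ+,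
      Real.log |x ^ 4 - (k:ℝ) ^ 4| / Real.sinh (π * k) ^ 2
        = 4 * Real.log x * (1 / Real.sinh (π * k) ^ 2) + L k / Real.sinh (π * k) ^ 2 := by
    intro k
    have hfac : x^4 - (k:ℝ)^4 = x^4 * (1 - (k:ℝ)^4 / x^4) := by field_simp
    have hne : (1:ℝ) - (k:ℝ)^4 / x^4 ≠ 0 := tne N k
    have : Real.log |x ^ 4 - (k:ℝ) ^ 4| = 4 * Real.log x + L k := by
      rw [hfac, abs_mul, Real.log_mul (by positivity) (by simpa [abs_ne_zero] using hne),
        abs_of_pos (by positivity : (0:ℝ) < x^4), Real.log_pow]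
      push_cast; ring
    rw [this]; ring
  -- summability
  have hsumL : Summable (fun k : ℕ+ => |L k / Real.sinh (π*k)^2|) := by
    refine Summable.of_nonneg_of_le (fun k => abs_nonneg _)
      (fun k => ?_) ((summable_S).mul_left (2/x^3))
    rw [abs_div, abs_of_pos (hs k)]
    have h1 : |L k| / Real.sinh (π*k)^2 ≤ (2*(k:ℝ)^4/x^3) / Real.sinh (π*k)^2 :=
      div_le_div_of_nonneg_right (hkey k) (hs k).le
    calc |L k| / Real.sinh (π*k)^2 ≤ (2*(k:ℝ)^4/x^3) / Real.sinh (π*k)^2 := h1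
      _ = 2/x^3 * ((k:ℝ)^4 / Real.sinh (π*k)^2) := by ring
  have hsumL' : Summable (fun k : ℕ+ => L k / Real.sinh (π*k)^2) := hsumL.of_abs
  have hsum1 : Summable (fun k : ℕ+ => 4 * Real.log x * (1 / Real.sinh (π*k)^2)) :=
    summable_inv_s.mul_left _
  -- rewrite tsum
  have htsum : (∑' k : ℕ+, Real.log |x ^ 4 - (k:ℝ) ^ 4| / Real.sinh (π * k) ^ 2)
      = 4 * Real.log x * (∑' k : ℕ+, 1 / Real.sinh (π * k) ^ 2)
        + ∑' k : ℕ+, L k / Real.sinh (π*k)^2 := by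
    rw [tsum_congr hterm, Summable.tsum_add hsum1 hsumL', tsum_mul_left]
  rw [htsum]
  simp only [add_sub_cancel_left]
  -- bound
  have hb1 : |∑' k : ℕ+, L k / Real.sinh (π*k)^2| ≤ ∑' k : ℕ+, |L k / Real.sinh (π*k)^2| := by
    have h := norm_tsum_le_tsum_norm (f := fun k : ℕ+ => L k / Real.sinh (π*k)^2)
      (by simp only [Real.norm_eq_abs]; exact hsumL)
    simpa only [Real.norm_eq_abs] using h
  have hb2 : (∑' k : ℕ+, |L k / Real.sinh (π*k)^2|) ≤ 2/x^3 * C := by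
    rw [hCdef, ← tsum_mul_left]
    refine Summable.tsum_le_tsum (fun k => ?_) hsumL ((summable_S).mul_left _)
    rw [abs_div, abs_of_pos (hs k)]
    calc |L k| / Real.sinh (π*k)^2 ≤ (2*(k:ℝ)^4/x^3) / Real.sinh (π*k)^2 :=
        div_le_div_of_nonneg_right (hkey k) (hs k).le
      _ = 2/x^3 * ((k:ℝ)^4 / Real.sinh (π*k)^2) := by ring
  have hzpow : x ^ (-2:ℤ) = 1 / x^2 := by
    rw [zpow_neg, one_div]
    norm_num
  have hnorm : ‖x ^ (-2:ℤ)‖ = 1/x^2 := by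
    rw [hzpow, Real.norm_eq_abs, abs_of_pos (by positivity)]
  rw [hnorm, Real.norm_eq_abs]
  have hfinal : 2/x^3 * C ≤ 2*C * (1/x^2) := by
    have hx2 : x^2 ≤ x^3 := by nlinarith
    have h1 : 1/x^3 ≤ 1/x^2 := by
      apply one_div_le_one_div_of_le (by positivity) hx2
    calc 2/x^3 * C = 2*C * (1/x^3) := by ring
      _ ≤ 2*C * (1/x^2) := by
          apply mul_le_mul_of_nonneg_left h1 (by linarith)
  linarith
end
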